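/- Let A be a 4-algebra. There is a bijection between crossed systems of A by the 1-dimensional space k and the set of pairs (λ, f) where λ : A → k is linear and f : A × A → k is a symmetric bilinear form satisfying f(a²,a²) + 2λ(a²)f(a,a) = 0 and λ(a)λ(a²) = 0 for all a ∈ A; the corresponding crossed product is k × A with multiplication (x,a)∘(y,b) = (λ(a)y + λ(b)x + f(a,b), a·b), and this multiplication makes k × A a 4-algebra exactly under these conditions. -/
import Mathlib


structure FourAlgebra (k : Type*) (A : Type*) [Field k] [AddCommGroup A] [Module k A] where
  mul : A →ₗ[k] A →ₗ[k] A
  comm : ∀ a b : A, mul a b = mul b a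
  four : ∀ a : A, mul (mul a a) (mul a a) = 0

/-- Crossed systems of a 4-algebra A by the 1-dimensional space k correspond to pairs
(λ, f) with λ : A → k linear and f a symmetric bilinear form satisfying
f(a²,a²) + 2λ(a²)f(a,a) = 0 and λ(a)λ(a²) = 0: the multiplication
(x,a)∘(y,b) = (λ(a)y + λ(b)x + f(a,b), a·b) on k × A is a 4-algebra structure exactly
under these conditions. -/
theorem stmt17 (k A : Type*) [Field k] [AddCommGroup A] [Module k A]
    (h2 : (2 : k) ≠ 0) (FA : FourAlgebra k A)
    (lam : A →ₗ[k] k) (f : A →ₗ[k] A →ₗ[k] k) :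
    let p : k × A → k × A → k × A := fun z w =>
      (lam z.2 * w.1 + lam w.2 * z.1 + f z.2 w.2, FA.mul z.2 w.2)
    ((∀ z w, p z w = p w z) ∧ (∀ z, p (p z z) (p z z) = 0)) ↔
      ((∀ a b : A, f a b = f b a) ∧
       (∀ a : A, f (FA.mul a a) (FA.mul a a) + 2 * (lam (FA.mul a a) * f a a) = 0) ∧
       (∀ a : A, lam a * lam (FA.mul a a) = 0)) := by
  intro p
  constructor
  · rintro ⟨hc, h4⟩
    have hsym : ∀ a b : A, f a b = f b a := by
      intro a b
      have := congrArg Prod.fst (hc (0, a) (0, b))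
      simpa [p] using this
    have hcond2 : ∀ a : A,
        f (FA.mul a a) (FA.mul a a) + 2 * (lam (FA.mul a a) * f a a) = 0 := by
      intro a
      have := congrArg Prod.fst (h4 (0, a))
      simp only [p, Prod.fst_zero, mul_zero, zero_add, add_zero] at this
      linear_combination this
    refine ⟨hsym, hcond2, ?_⟩
    intro a
    have h1 := congrArg Prod.fst (h4 (1, a))
    simp only [p, Prod.fst_zero, mul_one] at h1
    have h0 := hcond2 a
    have h4' : (4 : k) * (lam a * lam (FA.mul a a)) = 0 := by linear_combination h1 - h0
    have h4ne : (4 : k) ≠ 0 := by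
      have : (4 : k) = 2 * 2 := by norm_num
      rw [this]; exact mul_ne_zero h2 h2
    exact (mul_eq_zero.mp h4').resolve_left h4ne
  · rintro ⟨hsym, hcond2, hcond3⟩
    constructor
    · intro z w
      simp only [p, Prod.mk.injEq]
      exact ⟨by rw [hsym]; ring, FA.comm _ _⟩
    · intro z
      have hz : (0 : k × A) = (0, 0) := rfl
      simp only [p, hz, Prod.mk.injEq]
      refine ⟨?_, FA.four _⟩
      linear_combination (4 * z.1) * hcond3 z.2 + hcond2 z.2
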